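/- Logarithmic derivative estimate for (K,N)-convex densities: let K ∈ ℝ, N > 1, and let a < b be reals; if K > 0 assume additionally b − a ≤ π·√((N−1)/K). Let h : (a,b) → ℝ be positive and satisfy the (K,N)-convexity inequality on (a,b). Then at every t ∈ (a,b) at which h is differentiable, −(N−1)·C_{K,N}(b − t) ≤ h'(t)/h(t) ≤ (N−1)·C_{K,N}(t − a). -/

import Mathlib

noncomputable section

/-- The distortion coefficient `σ_κ^{(s)}(θ)`. -/
def sigmaCoeff (κ s θ : ℝ) : ℝ :=
  if 0 < κ then Real.sin (s * θ * Real.sqrt κ) / Real.sin (θ * Real.sqrt κ)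
  else if κ = 0 then s
  else Real.sinh (s * θ * Real.sqrt (-κ)) / Real.sinh (θ * Real.sqrt (-κ))

/-- A positive function `h` on a real interval `I` satisfies the `(K,N)`-convexity
inequality. -/
def KNConvexOn (K N : ℝ) (I : Set ℝ) (h : ℝ → ℝ) : Prop :=
  ∀ t₀ ∈ I, ∀ t₁ ∈ I, t₀ < t₁ → ∀ l ∈ Set.Icc (0 : ℝ) 1,
    sigmaCoeff (K / (N - 1)) (1 - l) (t₁ - t₀) * h t₀ ^ (1 / (N - 1)) +
        sigmaCoeff (K / (N - 1)) l (t₁ - t₀) * h t₁ ^ (1 / (N - 1)) ≤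
      h ((1 - l) * t₀ + l * t₁) ^ (1 / (N - 1))

/-- The comparison coefficient `C_{K,N}(θ)`. -/
def comparisonC (K N θ : ℝ) : ℝ :=
  if 0 < K then
    Real.sqrt (K / (N - 1)) *
      (Real.cos (θ * Real.sqrt (K / (N - 1))) / Real.sin (θ * Real.sqrt (K / (N - 1))))
  else if K = 0 then 1 / θ
  else
    Real.sqrt (-K / (N - 1)) *
      (Real.cosh (θ * Real.sqrt (-K / (N - 1))) / Real.sinh (θ * Real.sqrt (-K / (N - 1))))

open Real Filter Set Topology

lemma sigma_one (κ θ : ℝ) (hθ : 0 < θ) (hκ : 0 < κ → θ * Real.sqrt κ < Real.pi) :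
    sigmaCoeff κ 1 θ = 1 := by
  unfold sigmaCoeff
  split_ifs with h1 h2
  · rw [one_mul, div_self]
    have hsq : 0 < Real.sqrt κ := Real.sqrt_pos.mpr h1
    exact ne_of_gt (Real.sin_pos_of_pos_of_lt_pi (by positivity) (hκ h1))
  · rfl
  · rw [one_mul, div_self]
    have hκ' : 0 < -κ := by
      rcases lt_trichotomy κ 0 with h | h | h
      · linarith
      · exact absurd h h2
      · exact absurd h h1
    have hsq : 0 < Real.sqrt (-κ) := Real.sqrt_pos.mpr hκ'
    exact ne_of_gt (Real.sinh_pos_iff.mpr (by positivity))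

lemma sigma_nonneg (κ s θ : ℝ) (hs : 0 ≤ s) (hs1 : s ≤ 1) (hθ : 0 < θ)
    (hκ : 0 < κ → θ * Real.sqrt κ < Real.pi) : 0 ≤ sigmaCoeff κ s θ := by
  unfold sigmaCoeff
  split_ifs with h1 h2
  · have hsq : 0 < Real.sqrt κ := Real.sqrt_pos.mpr h1
    have hsin : 0 < Real.sin (θ * Real.sqrt κ) :=
      Real.sin_pos_of_pos_of_lt_pi (by positivity) (hκ h1)
    refine div_nonneg ?_ hsin.le
    refine Real.sin_nonneg_of_nonneg_of_le_pi (by positivity) ?_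
    have h2 : s * θ * Real.sqrt κ ≤ θ * Real.sqrt κ := by nlinarith [mul_pos hθ hsq]
    nlinarith [hκ h1]
  · exact hs
  · have hκ' : 0 < -κ := by
      rcases lt_trichotomy κ 0 with h | h | h
      · linarith
      · exact absurd h h2
      · exact absurd h h1
    have hsq : 0 < Real.sqrt (-κ) := Real.sqrt_pos.mpr hκ'
    exact div_nonneg (Real.sinh_nonneg_iff.mpr (by positivity))
      (Real.sinh_pos_iff.mpr (by positivity)).le

lemma sigma_deriv (K N θ : ℝ) (hN : 1 < N) (hθ : 0 < θ) :
    HasDerivAt (fun μ : ℝ => sigmaCoeff (K / (N - 1)) (1 - μ) θ)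
      (-(θ * comparisonC K N θ)) 0 := by
  have hN1 : (0:ℝ) < N - 1 := by linarith
  rcases lt_trichotomy K 0 with hK | hK | hK
  · -- K < 0
    have hNK : ¬ 0 < K := by linarith
    have hκneg : ¬ 0 < K / (N - 1) := by
      intro hc; rcases div_pos_iff.mp hc with ⟨h1, _⟩ | ⟨_, h2⟩ <;> linarith
    have hκne : K / (N - 1) ≠ 0 := div_ne_zero (by linarith) (by linarith)
    set s : ℝ := Real.sqrt (-(K / (N - 1))) with hs
    have hfun : (fun μ : ℝ => sigmaCoeff (K / (N - 1)) (1 - μ) θ)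
        = fun μ : ℝ => Real.sinh ((1 - μ) * (θ * s)) / Real.sinh (θ * s) := by
      funext μ
      simp only [sigmaCoeff, if_neg hκneg, if_neg hκne, hs, mul_assoc]
    rw [hfun]
    have hinner : HasDerivAt (fun μ : ℝ => (1 - μ) * (θ * s)) (-1 * (θ * s)) 0 :=
      ((hasDerivAt_id (0:ℝ)).const_sub 1).mul_const (θ * s)
    have h1 : HasDerivAt (fun μ : ℝ => Real.sinh ((1 - μ) * (θ * s)))
        (Real.cosh ((1 - (0:ℝ)) * (θ * s)) * (-1 * (θ * s))) 0 :=
      (Real.hasDerivAt_sinh _).comp 0 hinner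
    have := h1.div_const (Real.sinh (θ * s))
    refine this.congr_deriv ?_
    simp only [comparisonC, if_neg hNK, if_neg (by linarith : K ≠ 0)]
    have : -K / (N - 1) = -(K / (N - 1)) := by ring
    rw [this, ← hs]
    ring
  · -- K = 0
    subst hK
    have hκ0 : (0:ℝ) / (N - 1) = 0 := by simp
    have hfun : (fun μ : ℝ => sigmaCoeff ((0:ℝ) / (N - 1)) (1 - μ) θ)
        = fun μ : ℝ => 1 - μ := by
      funext μ; simp [sigmaCoeff, hκ0]
    rw [hfun]
    have h1 : HasDerivAt (fun μ : ℝ => 1 - μ) (-1) 0 := (hasDerivAt_id (0:ℝ)).const_sub 1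
    convert h1 using 1
    rw [comparisonC, if_neg (lt_irrefl 0), if_pos rfl]
    field_simp
  · -- K > 0
    have hκpos : 0 < K / (N - 1) := div_pos hK hN1
    set s : ℝ := Real.sqrt (K / (N - 1)) with hs
    have hfun : (fun μ : ℝ => sigmaCoeff (K / (N - 1)) (1 - μ) θ)
        = fun μ : ℝ => Real.sin ((1 - μ) * (θ * s)) / Real.sin (θ * s) := by
      funext μ
      simp only [sigmaCoeff, if_pos hκpos, hs, mul_assoc]
    rw [hfun]
    have hinner : HasDerivAt (fun μ : ℝ => (1 - μ) * (θ * s)) (-1 * (θ * s)) 0 :=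
      ((hasDerivAt_id (0:ℝ)).const_sub 1).mul_const (θ * s)
    have h1 : HasDerivAt (fun μ : ℝ => Real.sin ((1 - μ) * (θ * s)))
        (Real.cos ((1 - (0:ℝ)) * (θ * s)) * (-1 * (θ * s))) 0 :=
      (Real.hasDerivAt_sin _).comp 0 hinner
    have := h1.div_const (Real.sin (θ * s))
    refine this.congr_deriv ?_
    simp only [comparisonC, if_pos hK, ← hs]
    ring

lemma theta_lt (K N θ : ℝ) (hN : 1 < N) (hK : 0 < K)
    (hθ : θ < Real.pi * Real.sqrt ((N - 1) / K)) :
    θ * Real.sqrt (K / (N - 1)) < Real.pi := by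
  have hN1 : (0:ℝ) < N - 1 := by linarith
  have hκ : 0 < K / (N - 1) := div_pos hK hN1
  have hsq : 0 < Real.sqrt (K / (N - 1)) := Real.sqrt_pos.mpr hκ
  have hinv : Real.sqrt ((N - 1) / K) = (Real.sqrt (K / (N - 1)))⁻¹ := by
    rw [← Real.sqrt_inv]; congr 1; field_simp
  rw [hinv] at hθ
  calc θ * Real.sqrt (K / (N - 1))
      < Real.pi * (Real.sqrt (K / (N - 1)))⁻¹ * Real.sqrt (K / (N - 1)) :=
        mul_lt_mul_of_pos_right hθ hsq
    _ = Real.pi := by field_simp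

lemma compC_contAt (K N θ₀ : ℝ) (hN : 1 < N) (hθ : 0 < θ₀)
    (hK : 0 < K → θ₀ * Real.sqrt (K / (N - 1)) < Real.pi) :
    ContinuousAt (comparisonC K N) θ₀ := by
  have hN1 : (0:ℝ) < N - 1 := by linarith
  rcases lt_trichotomy K 0 with hK0 | hK0 | hK0
  · have hNK : ¬ 0 < K := by linarith
    have hfun : comparisonC K N = fun θ => Real.sqrt (-K / (N - 1)) *
        (Real.cosh (θ * Real.sqrt (-K / (N - 1))) / Real.sinh (θ * Real.sqrt (-K / (N - 1)))) := by
      funext θ; simp only [comparisonC, if_neg hNK, if_neg hK0.ne]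
    rw [hfun]
    have hsq : 0 < Real.sqrt (-K / (N - 1)) :=
      Real.sqrt_pos.mpr (div_pos (by linarith) hN1)
    have hsinh : Real.sinh (θ₀ * Real.sqrt (-K / (N - 1))) ≠ 0 :=
      ne_of_gt (Real.sinh_pos_iff.mpr (by positivity))
    exact continuousAt_const.mul
      (((Real.continuous_cosh.comp (continuous_id.mul continuous_const)).continuousAt).div
        ((Real.continuous_sinh.comp (continuous_id.mul continuous_const)).continuousAt) hsinh)
  · have hfun : comparisonC K N = fun θ => 1 / θ := by
      funext θ; simp [comparisonC, hK0]
    rw [hfun]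
    exact continuousAt_const.div continuousAt_id hθ.ne'
  · have hsq : 0 < Real.sqrt (K / (N - 1)) := Real.sqrt_pos.mpr (div_pos hK0 hN1)
    have hfun : comparisonC K N = fun θ => Real.sqrt (K / (N - 1)) *
        (Real.cos (θ * Real.sqrt (K / (N - 1))) / Real.sin (θ * Real.sqrt (K / (N - 1)))) := by
      funext θ; simp only [comparisonC, if_pos hK0]
    rw [hfun]
    have hsin : Real.sin (θ₀ * Real.sqrt (K / (N - 1))) ≠ 0 :=
      ne_of_gt (Real.sin_pos_of_pos_of_lt_pi (by positivity) (hK hK0))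
    exact continuousAt_const.mul
      (((Real.continuous_cos.comp (continuous_id.mul continuous_const)).continuousAt).div
        ((Real.continuous_sin.comp (continuous_id.mul continuous_const)).continuousAt) hsin)

lemma core_le (κ θ Cv t d : ℝ) (g : ℝ → ℝ) (hθ : 0 < θ)
    (hκ : 0 < κ → θ * Real.sqrt κ < Real.pi)
    (hg : HasDerivAt g d t)
    (hsd : HasDerivAt (fun μ : ℝ => sigmaCoeff κ (1 - μ) θ) (-(θ * Cv)) 0)
    (hineq : ∀ᶠ μ in 𝓝[>] (0:ℝ), sigmaCoeff κ (1 - μ) θ * g t ≤ g (t - μ * θ)) :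
    d ≤ Cv * g t := by
  set φ : ℝ → ℝ := fun μ => g (t - μ * θ) - sigmaCoeff κ (1 - μ) θ * g t with hφdef
  have hinner : HasDerivAt (fun μ : ℝ => t - μ * θ) (-θ) 0 := by
    simpa using ((hasDerivAt_id (0:ℝ)).mul_const θ).const_sub t
  have hg' : HasDerivAt g d ((fun μ : ℝ => t - μ * θ) 0) := by simpa using hg
  have h1 : HasDerivAt (fun μ : ℝ => g (t - μ * θ)) (d * (-θ)) 0 := hg'.comp 0 hinner
  have h2 : HasDerivAt (fun μ : ℝ => sigmaCoeff κ (1 - μ) θ * g t) (-(θ * Cv) * g t) 0 :=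
    hsd.mul_const (g t)
  have hφ : HasDerivAt φ (d * (-θ) - -(θ * Cv) * g t) 0 := h1.sub h2
  have hφ0 : φ 0 = 0 := by
    simp [hφdef, sigma_one κ θ hθ hκ]
  have hslope : Tendsto (slope φ 0) (𝓝[>] (0:ℝ)) (𝓝 (d * (-θ) - -(θ * Cv) * g t)) :=
    (hasDerivAt_iff_tendsto_slope.mp hφ).mono_left
      (nhdsWithin_mono _ fun x hx => ne_of_gt hx)
  have hD : 0 ≤ d * (-θ) - -(θ * Cv) * g t := by
    refine ge_of_tendsto hslope ?_
    filter_upwards [hineq, self_mem_nhdsWithin] with μ hμineq hμpos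
    rw [slope_def_field]
    have hφμ : 0 ≤ φ μ := sub_nonneg.mpr hμineq
    rw [hφ0]
    apply div_nonneg (by linarith) (by simp [le_of_lt (Set.mem_Ioi.mp hμpos)])
  nlinarith [hD, hθ]

lemma core_ge (κ θ Cv t d : ℝ) (g : ℝ → ℝ) (hθ : 0 < θ)
    (hκ : 0 < κ → θ * Real.sqrt κ < Real.pi)
    (hg : HasDerivAt g d t)
    (hsd : HasDerivAt (fun μ : ℝ => sigmaCoeff κ (1 - μ) θ) (-(θ * Cv)) 0)
    (hineq : ∀ᶠ μ in 𝓝[>] (0:ℝ), sigmaCoeff κ (1 - μ) θ * g t ≤ g (t + μ * θ)) :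
    -(Cv * g t) ≤ d := by
  set G : ℝ → ℝ := fun x => g (2 * t - x) with hGdef
  have hi : HasDerivAt (fun x : ℝ => 2 * t - x) (-1) t := (hasDerivAt_id t).const_sub (2 * t)
  have hg' : HasDerivAt g d ((fun x : ℝ => 2 * t - x) t) := by
    have : (2 : ℝ) * t - t = t := by ring
    simpa [this] using hg
  have hG : HasDerivAt G (-d) t := by
    have h' : HasDerivAt (g ∘ fun x : ℝ => 2 * t - x) (-d) t := by simpa using hg'.comp t hi
    exact h'
  have hGt : G t = g t := by simp [hGdef]; ring_nf
  have hineq' : ∀ᶠ μ in 𝓝[>] (0:ℝ), sigmaCoeff κ (1 - μ) θ * G t ≤ G (t - μ * θ) := by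
    filter_upwards [hineq] with μ hμ
    have he : 2 * t - (t - μ * θ) = t + μ * θ := by ring
    rw [hGt]
    show sigmaCoeff κ (1 - μ) θ * g t ≤ g (2 * t - (t - μ * θ))
    rw [he]; exact hμ
  have := core_le κ θ Cv t (-d) G hθ hκ hG hsd hineq'
  rw [hGt] at this
  linarith

/-- Logarithmic derivative estimate for `(K,N)`-convex densities: if `h > 0` satisfies
the `(K,N)`-convexity inequality on `(a,b)` (with `b − a ≤ π√((N−1)/K)` if `K > 0`),
then at every differentiability point `t ∈ (a,b)`,
`−(N−1)·C_{K,N}(b−t) ≤ h'(t)/h(t) ≤ (N−1)·C_{K,N}(t−a)`. -/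
theorem log_derivative_estimate (K N a b : ℝ) (hN : 1 < N) (hab : a < b)
    (hKab : 0 < K → b - a ≤ Real.pi * Real.sqrt ((N - 1) / K))
    (h : ℝ → ℝ) (hpos : ∀ t ∈ Set.Ioo a b, 0 < h t)
    (hconv : KNConvexOn K N (Set.Ioo a b) h) :
    ∀ t ∈ Set.Ioo a b, DifferentiableAt ℝ h t →
      -(N - 1) * comparisonC K N (b - t) ≤ deriv h t / h t ∧
        deriv h t / h t ≤ (N - 1) * comparisonC K N (t - a) := by
  intro t ht hdiff
  obtain ⟨hta, htb⟩ := ht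
  have hN1 : (0:ℝ) < N - 1 := by linarith
  have hht : 0 < h t := hpos t ⟨hta, htb⟩
  set κ : ℝ := K / (N - 1) with hκdef
  set c : ℝ := 1 / (N - 1) with hcdef
  have hc : 0 < c := by positivity
  set g : ℝ → ℝ := fun x => h x ^ c with hgdef
  have hgt : 0 < g t := Real.rpow_pos_of_pos hht c
  have hgs : ∀ x ∈ Set.Ioo a b, 0 < g x := fun x hx => Real.rpow_pos_of_pos (hpos x hx) c
  set d : ℝ := c * h t ^ (c - 1) * deriv h t with hddef
  have hg : HasDerivAt g d t := by
    have hr : HasDerivAt (fun x : ℝ => x ^ c) (c * h t ^ (c - 1)) (h t) :=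
      Real.hasDerivAt_rpow_const (Or.inl hht.ne')
    have := hr.comp t hdiff.hasDerivAt
    have h' : HasDerivAt ((fun x : ℝ => x ^ c) ∘ h) d t := by simpa [hddef, mul_assoc] using this
    exact h'
  -- the key algebraic relation between d and deriv h t
  have hdeq : d * (N - 1) * h t = deriv h t * g t := by
    rw [hddef, Real.rpow_sub_one hht.ne', hcdef]
    field_simp [hgdef]
    ring
  -- upward condition helper
  have hθcond : ∀ θ : ℝ, θ < b - a → (0 < K → θ * Real.sqrt κ < Real.pi) := by
    intro θ hθba hK
    exact theta_lt K N θ hN hK (lt_of_lt_of_le hθba (hKab hK))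
  have hκK : 0 < κ → 0 < K := by
    intro hκ0
    rcases div_pos_iff.mp hκ0 with ⟨h1, _⟩ | ⟨_, h2⟩
    · exact h1
    · linarith
  -- bound for fixed inner point, right side
  have hub : ∀ s ∈ Set.Ioo a t, deriv h t / h t ≤ (N - 1) * comparisonC K N (t - s) := by
    intro s hs
    have hθ : 0 < t - s := sub_pos.mpr hs.2
    have hθπ : 0 < κ → (t - s) * Real.sqrt κ < Real.pi := fun hκ0 =>
      hθcond (t - s) (by cases hs; cases' (em True) with _ _ <;> linarith) (hκK hκ0)
    have hsd := sigma_deriv K N (t - s) hN hθ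
    have hev : ∀ᶠ μ in 𝓝[>] (0:ℝ), sigmaCoeff κ (1 - μ) (t - s) * g t ≤ g (t - μ * (t - s)) := by
      filter_upwards [Ioo_mem_nhdsGT_of_mem (Set.mem_Ico.mpr ⟨le_refl (0:ℝ), one_pos⟩)]
        with μ hμ
      obtain ⟨hμ0, hμ1⟩ := hμ
      have hcs := hconv s ⟨hs.1, hs.2.trans htb⟩ t ⟨hta, htb⟩ hs.2 (1 - μ)
        ⟨by linarith, by linarith⟩
      have he1 : (1 : ℝ) - (1 - μ) = μ := by ring
      have he2 : μ * s + (1 - μ) * t = t - μ * (t - s) := by ring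
      rw [he1, he2] at hcs
      have hterm : 0 ≤ sigmaCoeff κ μ (t - s) * h s ^ (1 / (N - 1)) :=
        mul_nonneg (sigma_nonneg κ μ (t - s) hμ0.le hμ1.le hθ hθπ)
          (Real.rpow_pos_of_pos (hpos s ⟨hs.1, hs.2.trans htb⟩) _).le
      have : sigmaCoeff κ (1 - μ) (t - s) * h t ^ (1 / (N - 1)) ≤
          h (t - μ * (t - s)) ^ (1 / (N - 1)) := by linarith
      simpa [hgdef, hcdef] using this
    have hcore := core_le κ (t - s) (comparisonC K N (t - s)) t d g hθ hθπ hg hsd hev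
    -- translate d ≤ C * g t into deriv h t / h t ≤ (N-1) * C
    rw [div_le_iff₀ hht]
    have h2 := mul_le_mul_of_nonneg_right hcore
      (le_of_lt (mul_pos hN1 hht) : (0:ℝ) ≤ (N - 1) * h t)
    nlinarith [h2, hdeq, hgt]
  -- bound for fixed inner point, left side
  have hlb : ∀ s ∈ Set.Ioo t b, -((N - 1) * comparisonC K N (s - t)) ≤ deriv h t / h t := by
    intro s hs
    have hθ : 0 < s - t := sub_pos.mpr hs.1
    have hθπ : 0 < κ → (s - t) * Real.sqrt κ < Real.pi := fun hκ0 =>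
      hθcond (s - t) (by cases hs; cases' (em True) with _ _ <;> linarith) (hκK hκ0)
    have hsd := sigma_deriv K N (s - t) hN hθ
    have hev : ∀ᶠ μ in 𝓝[>] (0:ℝ), sigmaCoeff κ (1 - μ) (s - t) * g t ≤ g (t + μ * (s - t)) := by
      filter_upwards [Ioo_mem_nhdsGT_of_mem (Set.mem_Ico.mpr ⟨le_refl (0:ℝ), one_pos⟩)]
        with μ hμ
      obtain ⟨hμ0, hμ1⟩ := hμ
      have hcs := hconv t ⟨hta, htb⟩ s ⟨hta.trans hs.1, hs.2⟩ hs.1 μ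
        ⟨hμ0.le, hμ1.le⟩
      have he2 : (1 - μ) * t + μ * s = t + μ * (s - t) := by ring
      rw [he2] at hcs
      have hterm : 0 ≤ sigmaCoeff κ μ (s - t) * h s ^ (1 / (N - 1)) :=
        mul_nonneg (sigma_nonneg κ μ (s - t) hμ0.le hμ1.le hθ hθπ)
          (Real.rpow_pos_of_pos (hpos s ⟨hta.trans hs.1, hs.2⟩) _).le
      have : sigmaCoeff κ (1 - μ) (s - t) * h t ^ (1 / (N - 1)) ≤
          h (t + μ * (s - t)) ^ (1 / (N - 1)) := by linarith
      simpa [hgdef, hcdef] using this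
    have hcore := core_ge κ (s - t) (comparisonC K N (s - t)) t d g hθ hθπ hg hsd hev
    rw [le_div_iff₀ hht]
    have h2 := mul_le_mul_of_nonneg_right hcore
      (le_of_lt (mul_pos hN1 hht) : (0:ℝ) ≤ (N - 1) * h t)
    nlinarith [h2, hdeq, hgt]
  constructor
  · -- take the limit s → b⁻
    have hθba : b - t < b - a := by linarith
    have hcont : ContinuousAt (comparisonC K N) (b - t) :=
      compC_contAt K N (b - t) hN (by linarith) (fun hK => hθcond (b - t) hθba hK)
    have htend : Tendsto (fun s : ℝ => -((N - 1) * comparisonC K N (s - t))) (𝓝[<] b)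
        (𝓝 (-((N - 1) * comparisonC K N (b - t)))) := by
      apply Tendsto.neg
      apply Tendsto.const_mul
      have h1 : Tendsto (fun s : ℝ => s - t) (𝓝 b) (𝓝 (b - t)) :=
        (continuous_id.sub continuous_const).tendsto b
      exact (hcont.tendsto.comp h1).mono_left nhdsWithin_le_nhds
    have hle : -((N - 1) * comparisonC K N (b - t)) ≤ deriv h t / h t := by
      refine le_of_tendsto htend ?_
      filter_upwards [Ioo_mem_nhdsLT_of_mem (Set.mem_Ioc.mpr ⟨htb, le_refl b⟩)] with s hs
      exact hlb s hs
    linarith [hle]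
  · -- take the limit s → a⁺
    have hθba : t - a < b - a := by linarith
    have hcont : ContinuousAt (comparisonC K N) (t - a) :=
      compC_contAt K N (t - a) hN (by linarith) (fun hK => hθcond (t - a) hθba hK)
    have htend : Tendsto (fun s : ℝ => (N - 1) * comparisonC K N (t - s)) (𝓝[>] a)
        (𝓝 ((N - 1) * comparisonC K N (t - a))) := by
      apply Tendsto.const_mul
      have h1 : Tendsto (fun s : ℝ => t - s) (𝓝 a) (𝓝 (t - a)) :=
        (continuous_const.sub continuous_id).tendsto a
      exact (hcont.tendsto.comp h1).mono_left nhdsWithin_le_nhds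
    refine ge_of_tendsto htend ?_
    filter_upwards [Ioo_mem_nhdsGT_of_mem (Set.mem_Ico.mpr ⟨le_refl a, hta⟩)] with s hs
    exact hub s hs
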